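/- (Theorem 2) For r ≥ 2, let g_r(m; t) = Σ_{w} t^{α(w)}, summing over all words w over {1,...,n} with multiplicity vector m, where α(w) is the number of occurrences of the consecutive pattern 12...r in w. Then Σ_m g_r(m;t) x_1^{m_1}···x_n^{m_n} = 1/(1 - e_1 - Σ_{k=r}^{n} P_k^{(r)}(t)·e_k), where e_k is the k-th elementary symmetric polynomial in x_1,...,x_n and P_k^{(r)}(t) satisfies P_k^{(r)}=0 for k<r, P_r^{(r)}=t-1, P_k^{(r)}=(t-1)Σ_{i=1}^{r-1}P_{k-i}^{(r)} for k>r. -/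

import Mathlib

open Polynomial Finset

/-- The number of occurrences of the consecutive pattern `1 2 ... r` in the word
`w`, i.e. the number of indices `i` with `w_i < w_{i+1} < ⋯ < w_{i+r-1}`. -/
def occCount {α : Type*} [LT α] [DecidableRel ((· < ·) : α → α → Prop)]
    (r : ℕ) (w : List α) : ℕ :=
  ((Finset.range (w.length + 1 - r)).filter
    (fun i => ((w.drop i).take r).IsChain (· < ·))).card

/-- `g_r(m; t) = ∑_w t^{α(w)}` over words with multiplicity vector `m`. -/
noncomputable def patternEnumerator (r n : ℕ) (m : Fin n → ℕ) : Polynomial ℤ :=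
  ∑ᶠ w : {w : List (Fin n) // ∀ j, w.count j = m j},
    (X : Polynomial ℤ) ^ occCount r (w : List (Fin n))

noncomputable def patternGF (r n : ℕ) : MvPowerSeries (Fin n) (Polynomial ℤ) :=
  fun d => patternEnumerator r n ⇑d

section Aux

variable {n : ℕ}

/-- occurrences as a finset -/
def occF (r : ℕ) (w : List (Fin n)) : Finset ℕ :=
  (Finset.range (w.length + 1 - r)).filter
    (fun i => ((w.drop i).take r).IsChain (· < ·))

lemma mem_occF {r : ℕ} {w : List (Fin n)} {i : ℕ} (hr : 1 ≤ r) :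
    i ∈ occF r w ↔ i + r ≤ w.length ∧ ((w.drop i).take r).IsChain (· < ·) := by
  simp only [occF, mem_filter, mem_range, and_congr_left_iff]
  intro _
  rw [lt_tsub_iff_right, Nat.lt_add_one_iff]

def listsLen (n : ℕ) : ℕ → Finset (List (Fin n))
  | 0 => {[]}
  | (k+1) => (Finset.univ ×ˢ listsLen n k).image (fun p => p.1 :: p.2)

lemma mem_listsLen (L : ℕ) (w : List (Fin n)) : w ∈ listsLen n L ↔ w.length = L := by
  induction L generalizing w with
  | zero => simp [listsLen, List.length_eq_zero_iff]
  | succ k ih =>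
    simp only [listsLen, mem_image, mem_product, mem_univ, true_and]
    constructor
    · rintro ⟨⟨a, l⟩, hl, rfl⟩
      simp [ih l |>.mp hl]
    · intro h
      match w with
      | [] => simp at h
      | a :: l => exact ⟨⟨a, l⟩, (ih l).mpr (by simpa using h), rfl⟩

def wordsOf (d : Fin n → ℕ) : Finset (List (Fin n)) :=
  (listsLen n (∑ j, d j)).filter (fun w => ∀ j, w.count j = d j)

lemma length_eq_sum_count (w : List (Fin n)) : w.length = ∑ j, w.count j := by
  induction w with
  | nil => simp
  | cons a l ih =>
    simp only [List.length_cons, ih, List.count_cons, beq_iff_eq]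
    rw [Finset.sum_add_distrib]
    simp [Finset.sum_ite_eq]

lemma mem_wordsOf {d : Fin n → ℕ} {w : List (Fin n)} :
    w ∈ wordsOf d ↔ ∀ j, w.count j = d j := by
  constructor
  · exact fun h => (mem_filter.mp h).2
  · intro h
    refine mem_filter.mpr ⟨(mem_listsLen _ _).mpr ?_, h⟩
    rw [length_eq_sum_count]
    exact Finset.sum_congr rfl fun j _ => h j

def clusterSet (r k : ℕ) : Finset (Finset ℕ) :=
  (Finset.range (k - r + 1)).powerset.filter
    (fun A => r ≤ k ∧ 0 ∈ A ∧ (k - r) ∈ A ∧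
      ∀ b ∈ A, b ≠ 0 → ∃ c ∈ A, c < b ∧ b ≤ c + (r-1))

noncomputable def Qc (r k : ℕ) : Polynomial ℤ := ∑ A ∈ clusterSet r k, (X - 1 : Polynomial ℤ)^A.card

noncomputable def Mw (r : ℕ) (d : Fin n → ℕ) : Polynomial ℤ :=
  ∑ w ∈ wordsOf d, ∑ S ∈ (occF r w).powerset, (X - 1 : Polynomial ℤ)^S.card

lemma sum_powerset_pow {α : Type*} [DecidableEq α] (F : Finset α) :
    ∑ S ∈ F.powerset, (X - 1 : Polynomial ℤ)^S.card = X ^ F.card := by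
  induction F using Finset.induction_on with
  | empty => simp
  | @insert a F ha ih =>
    have h2 : ∑ S ∈ F.powerset, (X-1:Polynomial ℤ)^(insert a S).card
        = (X-1) * ∑ S ∈ F.powerset, (X-1:Polynomial ℤ)^S.card := by
      rw [Finset.mul_sum]
      refine Finset.sum_congr rfl fun S hS => ?_
      rw [Finset.card_insert_of_notMem (fun h => ha (Finset.mem_powerset.mp hS h)), pow_succ]
      ring
    rw [Finset.sum_powerset_insert ha, h2, ih, Finset.card_insert_of_notMem ha, pow_succ]
    ring

lemma Mw_eq_sum (r : ℕ) (d : Fin n → ℕ) :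
    Mw r d = ∑ w ∈ wordsOf d, (X : Polynomial ℤ) ^ occCount r w := by
  refine Finset.sum_congr rfl fun w _ => ?_
  rw [sum_powerset_pow]; rfl

lemma patternEnumerator_eq (r : ℕ) (d : Fin n → ℕ) :
    patternEnumerator r n d = Mw r d := by
  rw [Mw_eq_sum, patternEnumerator]
  letI : Fintype {w : List (Fin n) // ∀ j, w.count j = d j} :=
    Fintype.ofFinset (wordsOf d) (fun w => mem_wordsOf)
  rw [finsum_eq_sum_of_fintype]
  exact (Finset.sum_subtype (wordsOf d) (fun w => mem_wordsOf)
    (fun w => (X : Polynomial ℤ) ^ occCount r w)).symm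

lemma mem_clusterSet {r k : ℕ} {A : Finset ℕ} :
    A ∈ clusterSet r k ↔ (∀ a ∈ A, a ≤ k - r) ∧ r ≤ k ∧ 0 ∈ A ∧ (k - r) ∈ A ∧
      ∀ b ∈ A, b ≠ 0 → ∃ c ∈ A, c < b ∧ b ≤ c + (r - 1) := by
  simp only [clusterSet, Finset.mem_filter, Finset.mem_powerset, and_congr_left_iff,
    and_congr_left_iff]
  intro _
  constructor
  · intro h a ha; exact Nat.lt_add_one_iff.mp (Finset.mem_range.mp (h ha))
  · intro h a ha; exact Finset.mem_range.mpr (Nat.lt_add_one_iff.mpr (h a ha))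

lemma clusterSet_of_lt {r k : ℕ} (h : k < r) : clusterSet r k = ∅ := by
  ext A
  simp only [mem_clusterSet, Finset.notMem_empty, iff_false]
  rintro ⟨-, hrk, -⟩
  exact absurd hrk (Nat.not_le.mpr h)

lemma clusterSet_self {r : ℕ} (hr : 1 ≤ r) : clusterSet r r = {{0}} := by
  ext A
  simp only [mem_clusterSet, Finset.mem_singleton, Nat.sub_self]
  constructor
  · rintro ⟨hub, -, h0, -, -⟩
    apply Finset.Subset.antisymm
    · intro a ha
      simpa [Nat.le_zero.mp (hub a ha)] using Finset.mem_singleton_self 0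
    · intro a ha
      rw [Finset.mem_singleton.mp ha]; exact h0
  · rintro rfl
    refine ⟨by simp, le_refl r, by simp, by simp, by simp⟩

lemma Qc_of_lt {r k : ℕ} (h : k < r) : Qc r k = 0 := by
  rw [Qc, clusterSet_of_lt h, Finset.sum_empty]

lemma Qc_self {r : ℕ} (hr : 1 ≤ r) : Qc r r = X - 1 := by
  rw [Qc, clusterSet_self hr, Finset.sum_singleton, Finset.card_singleton, pow_one]

def cmin (A : Finset ℕ) : ℕ :=
  if h : (A.erase 0).Nonempty then (A.erase 0).min' h else 0

lemma cmin_mem {A : Finset ℕ} (h : (A.erase 0).Nonempty) : cmin A ∈ A.erase 0 := by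
  rw [cmin, dif_pos h]; exact Finset.min'_mem _ h

lemma cmin_le {A : Finset ℕ} {b : ℕ} (hb : b ∈ A.erase 0) : cmin A ≤ b := by
  rw [cmin, dif_pos ⟨b, hb⟩]; exact Finset.min'_le _ _ hb

lemma Qc_rec (r k : ℕ) (hr : 2 ≤ r) (hk : r < k) :
    Qc r k = (X - 1) * ∑ i ∈ Finset.Icc 1 (r - 1), Qc r (k - i) := by
  have hkr0 : k - r ≠ 0 := Nat.sub_ne_zero_of_lt hk
  rw [Finset.mul_sum]
  have hexp : ∀ i, (X - 1 : Polynomial ℤ) * Qc r (k - i)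
      = ∑ A ∈ clusterSet r (k - i), (X - 1) * (X - 1)^A.card := fun i => by
    rw [Qc, Finset.mul_sum]
  rw [Finset.sum_congr rfl fun i _ => hexp i]
  rw [← Finset.sum_sigma (Finset.Icc 1 (r-1)) (fun i => clusterSet r (k - i))
    (fun p => (X - 1) * (X-1)^p.2.card)]
  rw [Qc]
  refine Finset.sum_bij'
    (fun A _ => (⟨cmin A, (A.erase 0).image (· - cmin A)⟩ : Σ _i : ℕ, Finset ℕ))
    (fun p _ => insert 0 (p.2.image (· + p.1))) ?_ ?_ ?_ ?_ ?_
  · -- forward lands in target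
    rintro A hA
    obtain ⟨hub, hrk, h0, hkrA, hpred⟩ := mem_clusterSet.mp hA
    have hne : (A.erase 0).Nonempty := ⟨k - r, Finset.mem_erase.mpr ⟨hkr0, hkrA⟩⟩
    have hiA : cmin A ∈ A.erase 0 := cmin_mem hne
    have hi0 : cmin A ≠ 0 := (Finset.mem_erase.mp hiA).1
    have hiA' : cmin A ∈ A := (Finset.mem_erase.mp hiA).2
    have hile : ∀ b ∈ A, b ≠ 0 → cmin A ≤ b := fun b hb hb0 =>
      cmin_le (Finset.mem_erase.mpr ⟨hb0, hb⟩)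
    obtain ⟨c, hcA, hci, hic⟩ := hpred (cmin A) hiA' hi0
    have hc0 : c = 0 := by
      by_contra hc0
      exact absurd (hile c hcA hc0) (Nat.not_le.mpr hci)
    have hir : cmin A ≤ r - 1 := by rw [hc0] at hic; simpa using hic
    have hikr : cmin A ≤ k - r := hub _ hiA'
    refine Finset.mem_sigma.mpr ⟨Finset.mem_Icc.mpr ⟨Nat.one_le_iff_ne_zero.mpr hi0, hir⟩, ?_⟩
    show (A.erase 0).image (· - cmin A) ∈ clusterSet r (k - cmin A)
    refine mem_clusterSet.mpr ⟨?_, by omega, ?_, ?_, ?_⟩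
    · rintro a ha
      obtain ⟨b, hb, rfl⟩ := Finset.mem_image.mp ha
      have := hub b (Finset.mem_erase.mp hb).2
      omega
    · exact Finset.mem_image.mpr ⟨cmin A, hiA, by omega⟩
    · exact Finset.mem_image.mpr ⟨k - r, Finset.mem_erase.mpr ⟨hkr0, hkrA⟩, by omega⟩
    · rintro b' hb' hb'0
      obtain ⟨b, hb, rfl⟩ := Finset.mem_image.mp hb'
      have hbA : b ∈ A := (Finset.mem_erase.mp hb).2
      have hb0 : b ≠ 0 := (Finset.mem_erase.mp hb).1
      have hbi : cmin A ≤ b := hile b hbA hb0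
      have hbgt : cmin A < b := by
        rcases Nat.lt_or_ge (cmin A) b with h | h
        · exact h
        · exfalso; apply hb'0; omega
      obtain ⟨c, hcA, hcb, hbc⟩ := hpred b hbA hb0
      rcases Nat.eq_zero_or_pos c with rfl | hcpos
      · exact ⟨0, Finset.mem_image.mpr ⟨cmin A, hiA, by omega⟩, by omega, by omega⟩
      · have hcerase : c ∈ A.erase 0 := Finset.mem_erase.mpr ⟨Nat.pos_iff_ne_zero.mp hcpos, hcA⟩
        have hic2 : cmin A ≤ c := hile c hcA (Nat.pos_iff_ne_zero.mp hcpos)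
        exact ⟨c - cmin A, Finset.mem_image.mpr ⟨c, hcerase, rfl⟩, by omega, by omega⟩
  · -- backward lands in source
    rintro ⟨i, A'⟩ hp
    dsimp only
    obtain ⟨hi, hA'⟩ := Finset.mem_sigma.mp hp
    dsimp only at hi hA'
    obtain ⟨hi1, hir⟩ := Finset.mem_Icc.mp hi
    obtain ⟨hub, hrki, h0, hkrA, hpred⟩ := mem_clusterSet.mp hA'
    have hik : i + r ≤ k := by
      rcases le_or_gt i k with h | h
      · omega
      · exfalso; omega
    refine mem_clusterSet.mpr ⟨?_, by omega, Finset.mem_insert_self 0 _, ?_, ?_⟩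
    · rintro a ha
      rcases Finset.mem_insert.mp ha with rfl | ha
      · omega
      · obtain ⟨b, hb, rfl⟩ := Finset.mem_image.mp ha
        have := hub b hb
        omega
    · refine Finset.mem_insert.mpr (Or.inr (Finset.mem_image.mpr ⟨k - i - r, ?_, by omega⟩))
      exact hkrA
    · rintro b hb hb0
      rcases Finset.mem_insert.mp hb with rfl | hb
      · exact absurd rfl hb0
      obtain ⟨a, ha, rfl⟩ := Finset.mem_image.mp hb
      rcases Nat.eq_zero_or_pos a with rfl | hapos
      · exact ⟨0, Finset.mem_insert_self 0 _, by omega, by omega⟩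
      · obtain ⟨c, hcA, hca, hac⟩ := hpred a ha (Nat.pos_iff_ne_zero.mp hapos)
        exact ⟨c + i, Finset.mem_insert.mpr (Or.inr (Finset.mem_image.mpr ⟨c, hcA, rfl⟩)),
          by omega, by omega⟩
  · -- left inverse
    rintro A hA
    obtain ⟨hub, hrk, h0, hkrA, hpred⟩ := mem_clusterSet.mp hA
    have him : ((A.erase 0).image (· - cmin A)).image (· + cmin A) = A.erase 0 := by
      ext x
      simp only [Finset.mem_image]
      constructor
      · rintro ⟨y, ⟨z, hz, rfl⟩, rfl⟩
        have hzi : cmin A ≤ z := cmin_le hz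
        rwa [Nat.sub_add_cancel hzi]
      · rintro hx
        have hxi : cmin A ≤ x := cmin_le hx
        exact ⟨x - cmin A, ⟨x, hx, rfl⟩, by omega⟩
    dsimp only
    rw [him, Finset.insert_erase h0]
  · -- right inverse
    rintro ⟨i, A'⟩ hp
    obtain ⟨hi, hA'⟩ := Finset.mem_sigma.mp hp
    dsimp only at hi hA'
    obtain ⟨hi1, hir⟩ := Finset.mem_Icc.mp hi
    obtain ⟨hub, hrki, h0, hkrA, hpred⟩ := mem_clusterSet.mp hA'
    have h0nm : (0:ℕ) ∉ A'.image (· + i) := by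
      simp only [Finset.mem_image, not_exists]
      rintro x ⟨hx, hxe⟩
      omega
    have herase : (insert 0 (A'.image (· + i))).erase 0 = A'.image (· + i) :=
      Finset.erase_insert h0nm
    have hmin : cmin (insert 0 (A'.image (· + i))) = i := by
      apply le_antisymm
      · apply cmin_le
        rw [herase]
        exact Finset.mem_image.mpr ⟨0, h0, by omega⟩
      · have := cmin_mem (A := insert 0 (A'.image (· + i)))
          (by rw [herase]; exact ⟨0 + i, Finset.mem_image.mpr ⟨0, h0, rfl⟩⟩)
        rw [herase] at this
        obtain ⟨x, hx, hxe⟩ := Finset.mem_image.mp this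
        omega
    have himg : ((insert 0 (A'.image (· + i))).erase 0).image
        (· - cmin (insert 0 (A'.image (· + i)))) = A' := by
      rw [hmin, herase, Finset.image_image]
      ext x
      simp only [Finset.mem_image, Function.comp_apply]
      constructor
      · rintro ⟨y, hy, rfl⟩
        simpa using hy
      · intro hx
        exact ⟨x, hx, by omega⟩
    dsimp only
    exact Sigma.ext hmin (heq_of_eq himg)
  · -- weights agree
    rintro A hA
    obtain ⟨hub, hrk, h0, hkrA, hpred⟩ := mem_clusterSet.mp hA
    have hcard : ((A.erase 0).image (· - cmin A)).card = A.card - 1 := by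
      rw [Finset.card_image_of_injOn, Finset.card_erase_of_mem h0]
      intro x hx y hy hxy
      simp only [] at hxy
      have hxi : cmin A ≤ x := cmin_le (Finset.mem_coe.mp hx)
      have hyi : cmin A ≤ y := cmin_le (Finset.mem_coe.mp hy)
      omega
    dsimp only
    rw [hcard, ← pow_succ']
    congr 1
    have : 1 ≤ A.card := Finset.card_pos.mpr ⟨0, h0⟩
    omega

lemma Qc_eq_P (r : ℕ) (hr : 2 ≤ r) (P : ℕ → Polynomial ℤ)
    (h0 : ∀ k, k < r → P k = 0) (hbase : P r = X - 1)
    (hrec : ∀ k, r < k → P k = (X - 1) * ∑ i ∈ Finset.Icc 1 (r - 1), P (k - i)) :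
    ∀ k, Qc r k = P k := by
  intro k
  induction k using Nat.strong_induction_on with
  | _ k ih =>
    rcases lt_trichotomy k r with h | rfl | h
    · rw [h0 k h, Qc_of_lt h]
    · rw [hbase, Qc_self (by omega)]
    · rw [hrec k h, Qc_rec r k hr h]
      congr 1
      refine Finset.sum_congr rfl fun i hi => ?_
      obtain ⟨hi1, _⟩ := Finset.mem_Icc.mp hi
      exact ih (k - i) (by omega)

/-- the connected component of `0` in a set of marked occurrence positions -/
def comp (r : ℕ) (S : Finset ℕ) : Finset ℕ :=
  S.filter (fun a => ∀ b ∈ S, 0 < b → b ≤ a → ∃ c ∈ S, c < b ∧ b ≤ c + (r-1))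

section Comp

variable {r : ℕ} {S : Finset ℕ}

lemma comp_subset : comp r S ⊆ S := Finset.filter_subset _ _

lemma zero_mem_comp (h0 : 0 ∈ S) : 0 ∈ comp r S :=
  Finset.mem_filter.mpr ⟨h0, fun b _ hb hb' => absurd (Nat.lt_of_lt_of_le hb hb') (lt_irrefl 0)⟩

lemma comp_downward {a b : ℕ} (ha : a ∈ comp r S) (hb : b ∈ S) (hba : b ≤ a) : b ∈ comp r S := by
  obtain ⟨haS, hcond⟩ := Finset.mem_filter.mp ha
  exact Finset.mem_filter.mpr ⟨hb, fun c hc hc0 hcb => hcond c hc hc0 (hcb.trans hba)⟩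

/-- the maximum of the component of 0 -/
def compsup (r : ℕ) (S : Finset ℕ) : ℕ := (comp r S).sup id

lemma compsup_mem (h0 : 0 ∈ S) : compsup r S ∈ comp r S := by
  obtain ⟨b, hb, hbe⟩ := Finset.exists_mem_eq_sup (comp r S) ⟨0, zero_mem_comp h0⟩ id
  rw [compsup, hbe]; exact hb

lemma le_compsup {a : ℕ} (ha : a ∈ comp r S) : a ≤ compsup r S := Finset.le_sup (f := id) ha

lemma comp_pred (h0 : 0 ∈ S) {b : ℕ} (hb : b ∈ comp r S) (hb0 : b ≠ 0) :
    ∃ c ∈ comp r S, c < b ∧ b ≤ c + (r-1) := by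
  obtain ⟨hbS, hcond⟩ := Finset.mem_filter.mp hb
  obtain ⟨c, hcS, hcb, hbc⟩ := hcond b hbS (Nat.pos_of_ne_zero hb0) le_rfl
  exact ⟨c, comp_downward hb hcS hcb.le, hcb, hbc⟩

lemma comp_gap (hr : 1 ≤ r) (h0 : 0 ∈ S) {b : ℕ} (hbS : b ∈ S)
    (hbm : compsup r S < b) : compsup r S + r ≤ b := by
  by_contra hlt
  push_neg at hlt
  have hbcomp : b ∈ comp r S := by
    refine Finset.mem_filter.mpr ⟨hbS, fun b' hb' hb'0 hb'b => ?_⟩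
    rcases le_or_gt b' (compsup r S) with h | h
    · have : b' ∈ comp r S := comp_downward (compsup_mem h0) hb' h
      obtain ⟨c, hc, hcb, hbc⟩ := comp_pred h0 this (Nat.pos_iff_ne_zero.mp hb'0)
      exact ⟨c, comp_subset hc, hcb, hbc⟩
    · exact ⟨compsup r S, comp_subset (compsup_mem h0), h, by omega⟩
  exact absurd (le_compsup hbcomp) (Nat.not_le.mpr hbm)

lemma mem_comp_iff_lt (hr : 1 ≤ r) (h0 : 0 ∈ S) {b : ℕ} (hbS : b ∈ S) :
    b ∈ comp r S ↔ b < compsup r S + r := by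
  constructor
  · intro h; have := le_compsup h; omega
  · intro h
    rcases le_or_gt b (compsup r S) with h' | h'
    · exact comp_downward (compsup_mem h0) hbS h'
    · exact absurd (comp_gap hr h0 hbS h') (Nat.not_le.mpr h)

lemma comp_mem_clusterSet (hr : 1 ≤ r) (h0 : 0 ∈ S) :
    comp r S ∈ clusterSet r (compsup r S + r) := by
  refine mem_clusterSet.mpr ⟨?_, by omega, zero_mem_comp h0, ?_, ?_⟩
  · intro a ha; have := le_compsup ha; omega
  · have : compsup r S + r - r = compsup r S := by omega
    rw [this]; exact compsup_mem h0
  · intro b hb hb0; exact comp_pred h0 hb hb0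

lemma comp_cover (h0 : 0 ∈ S) {p : ℕ} (hp : p + 1 < compsup r S + r) :
    ∃ c ∈ comp r S, c ≤ p ∧ p + 1 ≤ c + (r - 1) := by
  rcases le_or_gt (compsup r S) p with h | h
  · exact ⟨compsup r S, compsup_mem h0, h, by omega⟩
  · have hne : ((comp r S).filter (fun x => p < x)).Nonempty :=
      ⟨compsup r S, Finset.mem_filter.mpr ⟨compsup_mem h0, h⟩⟩
    obtain ⟨b, hb, hmin⟩ := Finset.exists_min_image _ id hne
    obtain ⟨hbc, hpb⟩ := Finset.mem_filter.mp hb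
    obtain ⟨c, hc, hcb, hbcr⟩ := comp_pred h0 hbc (by omega)
    have hcp : c ≤ p := by
      by_contra hcp
      push_neg at hcp
      exact absurd (hmin c (Finset.mem_filter.mpr ⟨hc, hcp⟩)) (Nat.not_le.mpr hcb)
    exact ⟨c, hc, hcp, by omega⟩

end Comp

lemma occF_shift {r k : ℕ} (hr : 1 ≤ r) {w : List (Fin n)} (hk : k ≤ w.length) (i : ℕ) :
    k + i ∈ occF r w ↔ i ∈ occF r (w.drop k) := by
  rw [mem_occF hr, mem_occF hr, List.drop_drop, List.length_drop]
  constructor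
  · rintro ⟨h1, h2⟩
    exact ⟨by omega, h2⟩
  · rintro ⟨h1, h2⟩
    exact ⟨by omega, h2⟩

lemma occF_cons {r : ℕ} (hr : 1 ≤ r) (a : Fin n) (w : List (Fin n)) (i : ℕ) :
    i + 1 ∈ occF r (a :: w) ↔ i ∈ occF r w := by
  have := occF_shift hr (w := a :: w) (k := 1) (by simp) i
  rw [Nat.add_comm] at this
  simpa using this

lemma take_chain' {r : ℕ} (hr : 2 ≤ r) {w : List (Fin n)} {S : Finset ℕ}
    (hS : S ⊆ occF r w) (h0 : 0 ∈ S) :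
    (w.take (compsup r S + r)).IsChain (· < ·) := by
  have hmS : compsup r S ∈ S := comp_subset (compsup_mem h0)
  have hlen : compsup r S + r ≤ w.length := ((mem_occF (by omega)).mp (hS hmS)).1
  rw [List.isChain_iff_getElem]
  intro p hp
  have hplen : p + 1 < compsup r S + r := by
    rw [List.length_take] at hp
    omega
  obtain ⟨c, hc, hcp, hpc⟩ := comp_cover h0 hplen
  have hcS : c ∈ S := comp_subset hc
  obtain ⟨hclen, hchain⟩ := (mem_occF (by omega)).mp (hS hcS)
  rw [List.isChain_iff_getElem] at hchain
  have hlen2 : ((w.drop c).take r).length = r := by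
    simp only [List.length_take, List.length_drop]
    omega
  have hkey := hchain (p - c) (by omega)
  have e1 : c + (p - c) = p := by omega
  have e2 : c + (p - c + 1) = p + 1 := by omega
  simp only [List.getElem_take, List.getElem_drop] at hkey
  simp only [e1, e2] at hkey
  simp only [List.getElem_take]
  exact hkey

def unitvec (T : Finset (Fin n)) : Fin n → ℕ := fun i => if i ∈ T then 1 else 0

def pairsF (r : ℕ) (d : Fin n → ℕ) : Finset (Σ _w : List (Fin n), Finset ℕ) :=
  (wordsOf d).sigma (fun w => (occF r w).powerset)

lemma Mw_eq_pairsF (r : ℕ) (d : Fin n → ℕ) :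
    Mw r d = ∑ p ∈ pairsF r d, ((X:Polynomial ℤ)-1)^p.2.card := by
  rw [Mw, pairsF, Finset.sum_sigma]

lemma mem_pairsF {r : ℕ} {d : Fin n → ℕ} {p : Σ _w : List (Fin n), Finset ℕ} :
    p ∈ pairsF r d ↔ (∀ j, p.1.count j = d j) ∧ p.2 ⊆ occF r p.1 := by
  rw [pairsF, Finset.mem_sigma, mem_wordsOf, Finset.mem_powerset]

lemma count_sort (T : Finset (Fin n)) (j : Fin n) :
    (T.sort (· ≤ ·)).count j = if j ∈ T then 1 else 0 := by
  split_ifs with h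
  · exact List.count_eq_one_of_mem (Finset.sort_nodup _ _) ((Finset.mem_sort _).mpr h)
  · exact List.count_eq_zero_of_not_mem (fun hc => h ((Finset.mem_sort _).mp hc))

lemma partA {r : ℕ} (hr : 2 ≤ r) {d : Fin n → ℕ} (hd : d ≠ 0) :
    ∑ p ∈ (pairsF r d).filter (fun p => 0 ∉ p.2), ((X:Polynomial ℤ)-1)^p.2.card
    = ∑ j : Fin n, if d j ≠ 0 then Mw r (d - unitvec {j}) else 0 := by
  have hj0 : ∃ j, d j ≠ 0 := by
    by_contra h
    push_neg at h
    exact hd (funext fun j => h j)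
  obtain ⟨j₀, hj₀⟩ := hj0
  haveI : Inhabited (Fin n) := ⟨j₀⟩
  rw [← Finset.sum_filter]
  rw [Finset.sum_congr rfl (fun j _ => Mw_eq_pairsF r (d - unitvec {j}))]
  rw [← Finset.sum_sigma (Finset.univ.filter (fun j => d j ≠ 0))
    (fun j => pairsF r (d - unitvec {j})) (fun q => ((X:Polynomial ℤ)-1)^q.2.2.card)]
  have hwne : ∀ {w : List (Fin n)}, (∀ j, w.count j = d j) → w ≠ [] := by
    intro w hw hnil
    subst hnil
    exact hj₀ ((hw j₀).symm.trans (by simp))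
  refine Finset.sum_bij' (fun p _ => ⟨p.1.head!, ⟨p.1.tail, p.2.image (· - 1)⟩⟩)
    (fun q _ => ⟨q.1 :: q.2.1, q.2.2.image (· + 1)⟩) ?_ ?_ ?_ ?_ ?_
  · rintro ⟨w, S⟩ hp
    dsimp only
    obtain ⟨hps, h0S⟩ := Finset.mem_filter.mp hp
    obtain ⟨hw, hS⟩ := mem_pairsF.mp hps
    have hne : w ≠ [] := hwne hw
    have hcons : w.head! :: w.tail = w := List.cons_head!_tail hne
    have hhead : d w.head! ≠ 0 := by
      rw [← hw w.head!]
      exact Nat.pos_iff_ne_zero.mp (List.count_pos_iff.mpr (List.head!_mem_self hne))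
    refine Finset.mem_sigma.mpr ⟨Finset.mem_filter.mpr ⟨Finset.mem_univ _, hhead⟩, ?_⟩
    show (⟨w.tail, S.image (· - 1)⟩ : Σ _w : List (Fin n), Finset ℕ) ∈ _
    refine mem_pairsF.mpr ⟨?_, ?_⟩
    · intro j
      have hcw := hw j
      rw [← hcons] at hcw
      simp only [List.count_cons, beq_iff_eq] at hcw
      simp only [Pi.sub_apply, unitvec, Finset.mem_singleton]
      by_cases hj : j = w.head!
      · subst hj
        simp at hcw ⊢
        omega
      · rw [if_neg (fun h => hj h.symm)] at hcw
        rw [if_neg hj]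
        omega
    · intro x hx
      obtain ⟨s, hsS, rfl⟩ := Finset.mem_image.mp hx
      have hs0 : s ≠ 0 := fun h => h0S (h ▸ hsS)
      have hs : s ∈ occF r w := hS hsS
      rw [← hcons] at hs
      have : s - 1 + 1 = s := by omega
      rw [← this, occF_cons (by omega)] at hs
      exact hs
  · rintro ⟨j, w', S'⟩ hq
    dsimp only
    obtain ⟨hj, hq2⟩ := Finset.mem_sigma.mp hq
    have hdj : d j ≠ 0 := (Finset.mem_filter.mp hj).2
    obtain ⟨hw', hS'⟩ := mem_pairsF.mp hq2
    refine Finset.mem_filter.mpr ⟨mem_pairsF.mpr ⟨?_, ?_⟩, ?_⟩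
    · intro i
      have := hw' i
      simp only [Pi.sub_apply, unitvec, Finset.mem_singleton] at this
      simp only [List.count_cons, beq_iff_eq]
      by_cases hij : i = j
      · subst hij
        simp at this ⊢
        omega
      · rw [if_neg hij] at this
        rw [if_neg (fun h => hij h.symm)]
        omega
    · intro x hx
      obtain ⟨s, hsS, rfl⟩ := Finset.mem_image.mp hx
      rw [occF_cons (by omega)]
      exact hS' hsS
    · simp only [Finset.mem_image, not_exists]
      intro x hx
      omega
  · rintro ⟨w, S⟩ hp
    obtain ⟨hps, h0S⟩ := Finset.mem_filter.mp hp
    obtain ⟨hw, hS⟩ := mem_pairsF.mp hps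
    have hne : w ≠ [] := hwne hw
    have hcons : w.head! :: w.tail = w := List.cons_head!_tail hne
    dsimp only
    have himg : (S.image (· - 1)).image (· + 1) = S := by
      ext x
      simp only [Finset.mem_image]
      constructor
      · rintro ⟨y, ⟨z, hz, rfl⟩, rfl⟩
        have hz0 : z ≠ 0 := fun h => h0S (h ▸ hz)
        have : z - 1 + 1 = z := by omega
        rwa [this]
      · intro hx
        have hx0 : x ≠ 0 := fun h => h0S (h ▸ hx)
        exact ⟨x - 1, ⟨x, hx, rfl⟩, by omega⟩
    rw [himg, hcons]
  · rintro ⟨j, w', S'⟩ hq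
    dsimp only
    have himg : (S'.image (· + 1)).image (· - 1) = S' := by
      rw [Finset.image_image]
      ext x
      simp only [Finset.mem_image, Function.comp_apply]
      constructor
      · rintro ⟨y, hy, rfl⟩
        simpa using hy
      · intro hx
        exact ⟨x, hx, by omega⟩
    simp only [List.head!_cons, List.tail_cons, himg]
  · rintro ⟨w, S⟩ hp
    obtain ⟨hps, h0S⟩ := Finset.mem_filter.mp hp
    dsimp only
    congr 1
    rw [Finset.card_image_of_injOn]
    intro x hx y hy hxy
    simp only [] at hxy
    have hx0 : x ≠ 0 := fun h => h0S (h ▸ Finset.mem_coe.mp hx)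
    have hy0 : y ≠ 0 := fun h => h0S (h ▸ Finset.mem_coe.mp hy)
    omega

lemma partB {r : ℕ} (hr : 2 ≤ r) (d : Fin n → ℕ) :
    ∑ p ∈ (pairsF r d).filter (fun p => 0 ∈ p.2), ((X:Polynomial ℤ)-1)^p.2.card
    = ∑ k ∈ Finset.Icc r n, Qc r k *
        ∑ T ∈ Finset.univ.powersetCard k,
          (if ∀ i ∈ T, d i ≠ 0 then Mw r (d - unitvec T) else 0) := by
  have hr1 : (1:ℕ) ≤ r := by omega
  -- rewrite the RHS as a sum over a big sigma finset
  have hq : ∀ (k : ℕ) (d' : Fin n → ℕ),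
      Qc r k * Mw r d' = ∑ A ∈ clusterSet r k, ∑ p' ∈ pairsF r d',
        ((X:Polynomial ℤ)-1)^(A.card + p'.2.card) := by
    intro k d'
    rw [Qc, Mw_eq_pairsF, Finset.sum_mul_sum]
    exact Finset.sum_congr rfl fun A _ => Finset.sum_congr rfl fun p' _ => (pow_add _ _ _).symm
  have hstep : ∀ k ∈ Finset.Icc r n,
      Qc r k * ∑ T ∈ Finset.univ.powersetCard k,
          (if ∀ i ∈ T, d i ≠ 0 then Mw r (d - unitvec T) else 0)
      = ∑ z ∈ ((Finset.univ.powersetCard k).filter (fun T => ∀ i ∈ T, d i ≠ 0)).sigma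
            (fun T => (clusterSet r k).sigma (fun _A => pairsF r (d - unitvec T))),
          ((X:Polynomial ℤ)-1)^(z.2.1.card + z.2.2.2.card) := by
    intro k _
    rw [← Finset.sum_filter, Finset.mul_sum, Finset.sum_sigma]
    refine Finset.sum_congr rfl fun T _ => ?_
    rw [hq k (d - unitvec T), Finset.sum_sigma]
  rw [Finset.sum_congr rfl hstep, Finset.sum_sigma']
  refine (Finset.sum_bij'
    (fun p _ => (⟨compsup r p.2 + r,
        ⟨(p.1.take (compsup r p.2 + r)).toFinset,
          ⟨comp r p.2,
            ⟨p.1.drop (compsup r p.2 + r),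
              (p.2.filter (fun b => compsup r p.2 + r ≤ b)).image
                (· - (compsup r p.2 + r))⟩⟩⟩⟩ :
      Σ _k : ℕ, Σ _T : Finset (Fin n), Σ _A : Finset ℕ, Σ _w : List (Fin n), Finset ℕ))
    (fun q _ => ⟨Finset.sort q.2.1 ++ q.2.2.2.1, q.2.2.1 ∪ (q.2.2.2.2.image (· + q.1))⟩)
    ?_ ?_ ?_ ?_ ?_)
  · -- forward membership
    rintro ⟨w, S⟩ hp
    dsimp only
    obtain ⟨hps, h0S⟩ := Finset.mem_filter.mp hp
    obtain ⟨hw, hS⟩ := mem_pairsF.mp hps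
    set m := compsup r S with hm
    set k := m + r with hkdef
    have hmS : m ∈ S := comp_subset (compsup_mem h0S)
    have hlen : k ≤ w.length := ((mem_occF hr1).mp (hS hmS)).1
    have hchain : (w.take k).IsChain (· < ·) := take_chain' hr hS h0S
    have hpairw : (w.take k).Pairwise (· < ·) := List.isChain_iff_pairwise.mp hchain
    have hnodup : (w.take k).Nodup := hpairw.imp (fun h => ne_of_lt h)
    have hlentake : (w.take k).length = k := by rw [List.length_take]; omega
    have hTcard : (w.take k).toFinset.card = k := by
      rw [List.toFinset_card_of_nodup hnodup, hlentake]
    have hkn : k ≤ n := by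
      have := Finset.card_le_univ (w.take k).toFinset
      rw [hTcard] at this
      simpa using this
    simp only [Finset.mem_sigma]
    refine ⟨Finset.mem_Icc.mpr ⟨by omega, hkn⟩, ?_, comp_mem_clusterSet hr1 h0S, ?_⟩
    · refine Finset.mem_filter.mpr ⟨Finset.mem_powersetCard_univ.mpr hTcard, ?_⟩
      intro i hi
      rw [← hw i]
      have : i ∈ w := (List.take_sublist k w).subset (List.mem_toFinset.mp hi)
      exact Nat.pos_iff_ne_zero.mp (List.count_pos_iff.mpr this)
    refine mem_pairsF.mpr ⟨?_, ?_⟩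
    · intro j
      have hwj := hw j
      rw [← List.take_append_drop k w, List.count_append] at hwj
      have hcnt : (w.take k).count j = if j ∈ (w.take k).toFinset then 1 else 0 := by
        split_ifs with h
        · exact List.count_eq_one_of_mem hnodup (List.mem_toFinset.mp h)
        · exact List.count_eq_zero_of_not_mem (fun hc => h (List.mem_toFinset.mpr hc))
      rw [hcnt] at hwj
      simp only [Pi.sub_apply, unitvec]
      split_ifs with h
      · rw [if_pos h] at hwj; omega
      · rw [if_neg h] at hwj; omega
    · intro x hx
      obtain ⟨b, hb, rfl⟩ := Finset.mem_image.mp hx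
      obtain ⟨hbS, hkb⟩ := Finset.mem_filter.mp hb
      have : b = k + (b - k) := by omega
      have hbo : b ∈ occF r w := hS hbS
      rw [this, occF_shift hr1 hlen] at hbo
      exact hbo
  · -- backward membership
    rintro ⟨k, T, A, w', S'⟩ hq'
    dsimp only at *
    obtain ⟨hk, hrest⟩ := Finset.mem_sigma.mp hq'
    obtain ⟨hT, hrest2⟩ := Finset.mem_sigma.mp hrest
    obtain ⟨hA, hp'⟩ := Finset.mem_sigma.mp hrest2
    dsimp only at hT hA hp'
    obtain ⟨hrk, hkn⟩ := Finset.mem_Icc.mp hk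
    obtain ⟨hTpc, hTguard⟩ := Finset.mem_filter.mp hT
    have hTcard : T.card = k := Finset.mem_powersetCard_univ.mp hTpc
    obtain ⟨hw', hS'⟩ := mem_pairsF.mp hp'
    obtain ⟨hub, _, h0A, hkrA, hpred⟩ := mem_clusterSet.mp hA
    have hlT : (Finset.sort T).length = k := by
      rw [Finset.length_sort]; exact hTcard
    have hsorted : (Finset.sort T).Pairwise (· < ·) := List.sortedLT_iff_pairwise.mp (Finset.sortedLT_sort T)
    refine Finset.mem_filter.mpr ⟨mem_pairsF.mpr ⟨?_, ?_⟩, ?_⟩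
    · intro j
      rw [List.count_append, count_sort, hw' j]
      simp only [Pi.sub_apply, unitvec]
      split_ifs with h
      · have := hTguard j h
        omega
      · omega
    · intro x hx
      rcases Finset.mem_union.mp hx with hxA | hximg
      · have hxkr : x ≤ k - r := hub x hxA
        have hxk : x + r ≤ k := by omega
        rw [mem_occF hr1]
        constructor
        · rw [List.length_append, hlT]
          omega
        · have hdrop : (Finset.sort T ++ w').drop x
              = (Finset.sort T).drop x ++ w' := by
            rw [List.drop_append_of_le_length (by omega)]
          have htake : (((Finset.sort T).drop x) ++ w').take r
              = ((Finset.sort T).drop x).take r := by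
            rw [List.take_append_of_le_length (by rw [List.length_drop]; omega)]
          rw [hdrop, htake]
          refine List.Pairwise.isChain (List.Pairwise.sublist ?_ hsorted)
          exact (List.take_sublist _ _).trans (List.drop_sublist _ _)
      · obtain ⟨i, hiS', rfl⟩ := Finset.mem_image.mp hximg
        have hwdrop : (Finset.sort T ++ w').drop k = w' := List.drop_left' hlT
        have hlen : k ≤ (Finset.sort T ++ w').length := by
          rw [List.length_append, hlT]; omega
        have := (occF_shift hr1 hlen i).mpr (by rw [hwdrop]; exact hS' hiS')
        rwa [Nat.add_comm] at this
    · exact Finset.mem_union_left _ h0A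
  · -- left inverse
    rintro ⟨w, S⟩ hp
    obtain ⟨hps, h0S⟩ := Finset.mem_filter.mp hp
    obtain ⟨hw, hS⟩ := mem_pairsF.mp hps
    dsimp only
    set m := compsup r S with hm
    set k := m + r with hkdef
    have hmS : m ∈ S := comp_subset (compsup_mem h0S)
    have hlen : k ≤ w.length := ((mem_occF hr1).mp (hS hmS)).1
    have hchain : (w.take k).IsChain (· < ·) := take_chain' hr hS h0S
    have hpairw : (w.take k).Pairwise (· < ·) := List.isChain_iff_pairwise.mp hchain
    have hnodup : (w.take k).Nodup := hpairw.imp (fun h => ne_of_lt h)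
    haveI : IsAntisymm (Fin n) (· < ·) :=
      ⟨fun a b h1 h2 => absurd (h1.trans h2) (lt_irrefl a)⟩
    have hsort : Finset.sort (w.take k).toFinset = w.take k := by
      refine List.Perm.eq_of_pairwise (fun a b _ _ h1 h2 => absurd (h1.trans h2) (lt_irrefl a)) (List.sortedLT_iff_pairwise.mp (Finset.sortedLT_sort _)) hpairw ?_
      refine List.perm_of_nodup_nodup_toFinset_eq (Finset.sort_nodup _ _) hnodup ?_
      rw [Finset.sort_toFinset]
    have himg : ((S.filter (fun b => k ≤ b)).image (· - k)).image (· + k)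
        = S.filter (fun b => k ≤ b) := by
      rw [Finset.image_image]
      ext x
      simp only [Finset.mem_image, Function.comp_apply]
      constructor
      · rintro ⟨y, hy, rfl⟩
        have := (Finset.mem_filter.mp hy).2
        have hxy : y - k + k = y := by omega
        rwa [hxy]
      · intro hx
        have := (Finset.mem_filter.mp hx).2
        exact ⟨x, hx, by omega⟩
    have hunion : comp r S ∪ S.filter (fun b => k ≤ b) = S := by
      ext b
      constructor
      · intro hb
        rcases Finset.mem_union.mp hb with h | h
        · exact comp_subset h
        · exact Finset.mem_of_mem_filter _ h
      · intro hb
        rcases Nat.lt_or_ge b k with h | h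
        · exact Finset.mem_union_left _ ((mem_comp_iff_lt hr1 h0S hb).mpr h)
        · exact Finset.mem_union_right _ (Finset.mem_filter.mpr ⟨hb, h⟩)
    rw [hsort, List.take_append_drop, himg, hunion]
  · -- right inverse
    rintro ⟨k, T, A, w', S'⟩ hq'
    dsimp only at *
    obtain ⟨hk, hrest⟩ := Finset.mem_sigma.mp hq'
    obtain ⟨hT, hrest2⟩ := Finset.mem_sigma.mp hrest
    obtain ⟨hA, hp'⟩ := Finset.mem_sigma.mp hrest2
    dsimp only at hT hA hp'
    obtain ⟨hrk, hkn⟩ := Finset.mem_Icc.mp hk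
    obtain ⟨hTpc, hTguard⟩ := Finset.mem_filter.mp hT
    have hTcard : T.card = k := Finset.mem_powersetCard_univ.mp hTpc
    obtain ⟨hw', hS'⟩ := mem_pairsF.mp hp'
    obtain ⟨hub, _, h0A, hkrA, hpred⟩ := mem_clusterSet.mp hA
    have hlT : (Finset.sort T).length = k := by
      rw [Finset.length_sort]; exact hTcard
    set S := A ∪ (S'.image (· + k)) with hSdef
    have h0S : 0 ∈ S := Finset.mem_union_left _ h0A
    have himgk : ∀ x ∈ S'.image (· + k), k ≤ x := by
      intro x hx
      obtain ⟨i, _, rfl⟩ := Finset.mem_image.mp hx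
      omega
    have hAk : ∀ x ∈ A, x < k := by
      intro x hx
      have := hub x hx
      omega
    have hcomp : comp r S = A := by
      apply Finset.Subset.antisymm
      · intro x hx
        by_contra hxA
        have hne : ((comp r S).filter (fun y => y ∉ A)).Nonempty :=
          ⟨x, Finset.mem_filter.mpr ⟨hx, hxA⟩⟩
        obtain ⟨y, hy, hymin⟩ := Finset.exists_min_image _ id hne
        obtain ⟨hyc, hyA⟩ := Finset.mem_filter.mp hy
        have hyS : y ∈ S := comp_subset hyc
        have hyk : k ≤ y := by
          rcases Finset.mem_union.mp hyS with h | h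
          · exact absurd h hyA
          · exact himgk y h
        have hy0 : y ≠ 0 := by omega
        obtain ⟨c, hcc, hcy, hyc2⟩ := comp_pred h0S hyc hy0
        have hcA : c ∉ A := by
          intro hcA
          have := hub c hcA
          omega
        exact absurd (hymin c (Finset.mem_filter.mpr ⟨hcc, hcA⟩)) (Nat.not_le.mpr hcy)
      · intro a ha
        refine Finset.mem_filter.mpr ⟨Finset.mem_union_left _ ha, ?_⟩
        intro b hb hb0 hba
        have hbA : b ∈ A := by
          rcases Finset.mem_union.mp hb with h | h
          · exact h
          · have := himgk b h
            have := hub a ha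
            omega
        obtain ⟨c, hcA, hcb, hbc⟩ := hpred b hbA (by omega)
        exact ⟨c, Finset.mem_union_left _ hcA, hcb, hbc⟩
    have hsup : compsup r S = k - r := by
      rw [compsup, hcomp]
      apply le_antisymm
      · exact Finset.sup_le (fun a ha => hub a ha)
      · exact Finset.le_sup (f := id) hkrA
    have hk' : compsup r S + r = k := by omega
    have hw'' : (Finset.sort T ++ w').drop k = w' := List.drop_left' hlT
    have htake : (Finset.sort T ++ w').take k = Finset.sort T :=
      List.take_left' hlT
    have hT'' : ((Finset.sort T ++ w').take k).toFinset = T := by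
      rw [htake, Finset.sort_toFinset]
    have hfilter : S.filter (fun b => k ≤ b) = S'.image (· + k) := by
      ext x
      constructor
      · intro hx
        obtain ⟨hxS, hkx⟩ := Finset.mem_filter.mp hx
        rcases Finset.mem_union.mp hxS with h | h
        · exact absurd (hAk x h) (by omega)
        · exact h
      · intro hx
        exact Finset.mem_filter.mpr ⟨Finset.mem_union_right _ hx, himgk x hx⟩
    have hS'' : (S.filter (fun b => k ≤ b)).image (· - k) = S' := by
      rw [hfilter, Finset.image_image]
      ext x
      simp only [Finset.mem_image, Function.comp_apply]
      constructor
      · rintro ⟨y, hy, rfl⟩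
        simpa using hy
      · intro hx
        exact ⟨x, hx, by omega⟩
    simp only [hk', hcomp, hT'', hw'', hS'']
  · -- weights
    rintro ⟨w, S⟩ hp
    obtain ⟨hps, h0S⟩ := Finset.mem_filter.mp hp
    obtain ⟨hw, hS⟩ := mem_pairsF.mp hps
    dsimp only
    set m := compsup r S with hm
    set k := m + r with hkdef
    have hunion : comp r S ∪ S.filter (fun b => k ≤ b) = S := by
      ext b
      constructor
      · intro hb
        rcases Finset.mem_union.mp hb with h | h
        · exact comp_subset h
        · exact Finset.mem_of_mem_filter _ h
      · intro hb
        rcases Nat.lt_or_ge b k with h | h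
        · exact Finset.mem_union_left _ ((mem_comp_iff_lt hr1 h0S hb).mpr h)
        · exact Finset.mem_union_right _ (Finset.mem_filter.mpr ⟨hb, h⟩)
    have hdisj : Disjoint (comp r S) (S.filter (fun b => k ≤ b)) := by
      rw [Finset.disjoint_left]
      intro a ha ha'
      have h1 := le_compsup ha
      have h2 := (Finset.mem_filter.mp ha').2
      omega
    have hcardimg : ((S.filter (fun b => k ≤ b)).image (· - k)).card
        = (S.filter (fun b => k ≤ b)).card := by
      apply Finset.card_image_of_injOn
      intro x hx y hy hxy
      have hx' := (Finset.mem_filter.mp (Finset.mem_coe.mp hx)).2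
      have hy' := (Finset.mem_filter.mp (Finset.mem_coe.mp hy)).2
      simp only [] at hxy
      omega
    congr 1
    rw [hcardimg, ← Finset.card_union_of_disjoint hdisj, hunion]

lemma master (r : ℕ) (hr : 2 ≤ r) (d : Fin n → ℕ) :
    Mw r d = (if d = 0 then 1 else 0)
      + (∑ j : Fin n, if d j ≠ 0 then Mw r (d - unitvec {j}) else 0)
      + ∑ k ∈ Finset.Icc r n, Qc r k *
          ∑ T ∈ Finset.univ.powersetCard k,
            (if ∀ i ∈ T, d i ≠ 0 then Mw r (d - unitvec T) else 0) := by
  by_cases hd : d = 0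
  · subst hd
    have hw0 : wordsOf (0 : Fin n → ℕ) = {[]} := by
      ext w
      rw [mem_wordsOf, Finset.mem_singleton]
      constructor
      · intro h
        rw [← List.length_eq_zero_iff, length_eq_sum_count]
        simp [h]
      · rintro rfl
        simp
    have hMw : Mw r (0 : Fin n → ℕ) = 1 := by
      rw [Mw, hw0, Finset.sum_singleton]
      have : occF r ([] : List (Fin n)) = ∅ := by
        rw [occF]
        have : (0:ℕ) + 1 - r = 0 := by omega
        simp [this]
      rw [this]
      simp
    rw [hMw, if_pos rfl]
    have h1 : ∀ j : Fin n, (if (0 : Fin n → ℕ) j ≠ 0 then Mw r (0 - unitvec {j}) else 0) = 0 := by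
      intro j
      simp
    have h2 : ∀ k ∈ Finset.Icc r n, Qc r k *
        ∑ T ∈ Finset.univ.powersetCard k,
          (if ∀ i ∈ T, (0 : Fin n → ℕ) i ≠ 0 then Mw r (0 - unitvec T) else 0) = 0 := by
      intro k hk
      obtain ⟨hrk, _⟩ := Finset.mem_Icc.mp hk
      have hinner : ∀ T ∈ Finset.univ.powersetCard k,
          (if ∀ i ∈ T, (0 : Fin n → ℕ) i ≠ 0 then Mw r (0 - unitvec T) else 0) = 0 := by
        intro T hT
        rw [if_neg]
        intro h
        have hTc := Finset.mem_powersetCard_univ.mp hT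
        obtain ⟨i, hi⟩ := Finset.card_pos.mp (by omega : 0 < T.card)
        exact (h i hi) rfl
      rw [Finset.sum_congr rfl hinner, Finset.sum_const_zero, mul_zero]
    rw [Finset.sum_congr rfl h2, Finset.sum_const_zero]
    rw [Finset.sum_congr rfl (fun j _ => h1 j), Finset.sum_const_zero]
    ring
  · rw [if_neg hd, zero_add, Mw_eq_pairsF]
    rw [← Finset.sum_filter_add_sum_filter_not (pairsF r d) (fun p => 0 ∉ p.2)]
    have hfc : (pairsF r d).filter (fun p => ¬ 0 ∉ p.2) = (pairsF r d).filter (fun p => 0 ∈ p.2) := by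
      apply Finset.filter_congr
      intro p _
      simp [not_not]
    rw [partA hr hd, hfc, partB hr d]

end Aux

/-- (Theorem 2) `∑_m g_r(m;t) x^m = 1/(1 - e_1 - ∑_{k=r}^n P_k^{(r)}(t) e_k)`. -/
theorem pattern_enumerator_gf (n r : ℕ) (hr : 2 ≤ r) (P : ℕ → Polynomial ℤ)
    (h0 : ∀ k, k < r → P k = 0)
    (hbase : P r = X - 1)
    (hrec : ∀ k, r < k → P k = (X - 1) * ∑ i ∈ Finset.Icc 1 (r - 1), P (k - i)) :
    patternGF r n *
      ((1 - MvPolynomial.esymm (Fin n) (Polynomial ℤ) 1 -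
        ∑ k ∈ Finset.Icc r n,
          MvPolynomial.C (P k) * MvPolynomial.esymm (Fin n) (Polynomial ℤ) k :
        MvPolynomial (Fin n) (Polynomial ℤ)) : MvPowerSeries (Fin n) (Polynomial ℤ)) = 1 := by
  classical
  have hQ := Qc_eq_P r hr P h0 hbase hrec
  apply MvPowerSeries.ext
  intro d
  set u : Finset (Fin n) → (Fin n →₀ ℕ) := fun T => ∑ i ∈ T, Finsupp.single i 1 with hu
  have huapp : ∀ (T : Finset (Fin n)) (j : Fin n), u T j = unitvec T j := by
    intro T j
    rw [hu]
    simp only [Finsupp.finset_sum_apply, Finsupp.single_apply, unitvec]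
    rw [Finset.sum_ite_eq' T j (fun _ => 1)]
  have hule : ∀ (T : Finset (Fin n)), (u T ≤ d ↔ ∀ i ∈ T, d i ≠ 0) := by
    intro T
    rw [Finsupp.le_def]
    constructor
    · intro h i hi
      have h2 := h i
      rw [huapp] at h2
      simp only [unitvec, if_pos hi] at h2
      omega
    · intro h i
      rw [huapp, unitvec]
      split_ifs with hi
      · have := h i hi
        omega
      · omega
  have hcoe : ∀ (T : Finset (Fin n)), ⇑(d - u T) = ⇑d - unitvec T := by
    intro T
    rw [Finsupp.coe_tsub]
    funext j
    simp only [Pi.sub_apply, huapp]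
  -- rewrite polynomial as sum of monomials
  have hB : (1 - MvPolynomial.esymm (Fin n) (Polynomial ℤ) 1 -
      ∑ k ∈ Finset.Icc r n, MvPolynomial.C (P k) * MvPolynomial.esymm (Fin n) (Polynomial ℤ) k)
      = 1 - (∑ T ∈ Finset.powersetCard 1 Finset.univ,
              MvPolynomial.monomial (u T) (1:Polynomial ℤ))
        - ∑ k ∈ Finset.Icc r n, ∑ T ∈ Finset.powersetCard k Finset.univ,
            MvPolynomial.monomial (u T) (P k) := by
    rw [MvPolynomial.esymm_eq_sum_monomial]
    congr 1
    refine Finset.sum_congr rfl fun k _ => ?_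
    rw [MvPolynomial.esymm_eq_sum_monomial, Finset.mul_sum]
    exact Finset.sum_congr rfl fun T _ => by rw [MvPolynomial.C_mul_monomial, mul_one]
  rw [hB]
  have hco : (((1 - (∑ T ∈ Finset.powersetCard 1 Finset.univ,
              MvPolynomial.monomial (u T) (1:Polynomial ℤ))
        - ∑ k ∈ Finset.Icc r n, ∑ T ∈ Finset.powersetCard k Finset.univ,
            MvPolynomial.monomial (u T) (P k)) : MvPolynomial (Fin n) (Polynomial ℤ)) :
        MvPowerSeries (Fin n) (Polynomial ℤ))
      = 1 - (∑ T ∈ Finset.powersetCard 1 Finset.univ,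
              MvPowerSeries.monomial (u T) (1:Polynomial ℤ))
        - ∑ k ∈ Finset.Icc r n, ∑ T ∈ Finset.powersetCard k Finset.univ,
            MvPowerSeries.monomial (u T) (P k) := by
    rw [← MvPolynomial.coeToMvPowerSeries.ringHom_apply, map_sub, map_sub, map_one,
      map_sum, map_sum]
    congr 1
    · congr 1
      refine Finset.sum_congr rfl fun T _ => ?_
      rw [MvPolynomial.coeToMvPowerSeries.ringHom_apply, MvPolynomial.coe_monomial]
    · refine Finset.sum_congr rfl fun k _ => ?_
      rw [map_sum]
      refine Finset.sum_congr rfl fun T _ => ?_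
      rw [MvPolynomial.coeToMvPowerSeries.ringHom_apply, MvPolynomial.coe_monomial]
  rw [hco, mul_sub, mul_sub, mul_one, Finset.mul_sum]
  rw [Finset.mul_sum]
  have hmul : ∀ k ∈ Finset.Icc r n, patternGF r n * ∑ T ∈ Finset.powersetCard k Finset.univ,
      MvPowerSeries.monomial (u T) (P k)
      = ∑ T ∈ Finset.powersetCard k Finset.univ,
          patternGF r n * MvPowerSeries.monomial (u T) (P k) :=
    fun k _ => Finset.mul_sum _ _ _
  rw [Finset.sum_congr rfl hmul]
  rw [map_sub, map_sub, map_sum, map_sum]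
  rw [Finset.sum_congr rfl (fun k (_ : k ∈ Finset.Icc r n) =>
    map_sum (MvPowerSeries.coeff d) _ (Finset.powersetCard k Finset.univ))]
  simp only [MvPowerSeries.coeff_mul_monomial]
  have hgf : ∀ e : Fin n →₀ ℕ, (MvPowerSeries.coeff e) (patternGF r n)
      = Mw r ⇑e := by
    intro e
    rw [MvPowerSeries.coeff_apply]
    show patternEnumerator r n ⇑e = _
    exact patternEnumerator_eq r ⇑e
  have hA' : (∑ T ∈ Finset.powersetCard 1 Finset.univ,
      if u T ≤ d then (MvPowerSeries.coeff (d - u T)) (patternGF r n) * 1 else 0)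
      = ∑ j : Fin n, if d j ≠ 0 then Mw r (⇑d - unitvec {j}) else 0 := by
    rw [Finset.powersetCard_one, Finset.sum_map]
    refine Finset.sum_congr rfl fun j _ => ?_
    simp only [Function.Embedding.coeFn_mk, mul_one]
    by_cases h : d j ≠ 0
    · rw [if_pos ((hule {j}).mpr (by simpa using h)), if_pos h, hgf, hcoe]
    · rw [if_neg (fun hc => h (by simpa using (hule {j}).mp hc)), if_neg h]
  have hB' : (∑ k ∈ Finset.Icc r n, ∑ T ∈ Finset.powersetCard k Finset.univ,
      if u T ≤ d then (MvPowerSeries.coeff (d - u T)) (patternGF r n) * P k else 0)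
      = ∑ k ∈ Finset.Icc r n, Qc r k * ∑ T ∈ Finset.univ.powersetCard k,
          (if ∀ i ∈ T, d i ≠ 0 then Mw r (⇑d - unitvec T) else 0) := by
    refine Finset.sum_congr rfl fun k _ => ?_
    rw [hQ k, Finset.mul_sum]
    refine Finset.sum_congr rfl fun T _ => ?_
    by_cases h : ∀ i ∈ T, d i ≠ 0
    · rw [if_pos ((hule T).mpr h), if_pos h, hgf, hcoe, mul_comm]
    · rw [if_neg (fun hc => h ((hule T).mp hc)), if_neg h, mul_zero]
  rw [hA', hB', hgf d, master r hr ⇑d, MvPowerSeries.coeff_one]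
  have h0iff : (⇑d = (0 : Fin n → ℕ)) ↔ d = 0 := by
    constructor
    · intro h
      ext j
      exact congrFun h j
    · rintro rfl
      rfl
  rw [if_congr h0iff rfl rfl]
  ring
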